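/- Exponential association (1-d version): in the setting of fitting k centers β_1,...,β_k ∈ R to data X ~ N(θ*_s, 1), if ‖β_j - θ*_s‖ ≥ ‖β_i - θ*_s‖ + (5/6)D with D ≥ 35, then E_s[Ψ_j] ≤ e^{-D²/33}, where Ψ_j = exp(-(X-β_j)²/2)/Σ_ℓ exp(-(X-β_ℓ)²/2). -/

import Mathlib

open MeasureTheory Real

set_option maxHeartbeats 1000000

noncomputable def gauss1 (θ x : ℝ) : ℝ := (Real.sqrt (2 * π))⁻¹ * Real.exp (-(x - θ) ^ 2 / 2)

lemma gauss1_shift_integral (m : ℝ) :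
    ∫ x : ℝ, (Real.sqrt (2 * π))⁻¹ * Real.exp (-(x - m) ^ 2 / 2) = 1 := by
  have h2 : (∫ x : ℝ, (Real.sqrt (2 * π))⁻¹ * Real.exp (-(x - m) ^ 2 / 2))
      = ∫ x : ℝ, (Real.sqrt (2 * π))⁻¹ * Real.exp (-x ^ 2 / 2) :=
    integral_sub_right_eq_self (fun x => (Real.sqrt (2 * π))⁻¹ * Real.exp (-x ^ 2 / 2)) m
  rw [h2]
  have h3 : ∫ x : ℝ, Real.exp (-(1/2 : ℝ) * x ^ 2) = Real.sqrt (π / (1/2)) :=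
    integral_gaussian (1/2)
  have h4 : ∀ x : ℝ, (Real.sqrt (2 * π))⁻¹ * Real.exp (-x ^ 2 / 2)
      = (Real.sqrt (2 * π))⁻¹ * Real.exp (-(1/2 : ℝ) * x ^ 2) := by
    intro x; ring_nf
  rw [integral_congr_ae (Filter.Eventually.of_forall h4), integral_const_mul, h3]
  have : Real.sqrt (π / (1/2)) = Real.sqrt (2 * π) := by norm_num [mul_comm]
  rw [this]
  have hpos : (0:ℝ) < Real.sqrt (2 * π) := Real.sqrt_pos.2 (by positivity)
  field_simp

/-- **Exponential association** (Lemma, 1-d): if `|β_j - θ*_s| ≥ |β_i - θ*_s| + (5/6)D`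
with `D ≥ 35`, then `E_s[Ψ_j] ≤ e^{-D²/33}`. -/
theorem exponential_association {k : ℕ} (β : Fin k → ℝ) (θ : ℝ) (i j : Fin k)
    (D : ℝ) (hD : 35 ≤ D)
    (hdom : |β i - θ| + 5 / 6 * D ≤ |β j - θ|) :
    ∫ x, gauss1 θ x *
        (Real.exp (-(x - β j) ^ 2 / 2) / ∑ ℓ, Real.exp (-(x - β ℓ) ^ 2 / 2))
      ≤ Real.exp (-D ^ 2 / 33) := by
  have hD0 : (0:ℝ) < D := by linarith
  set gi := β i - θ with hgi
  set gj := β j - θ with hgj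
  set S : ℝ := |gi| + |gj| with hS
  have hSpos : 0 < S := by
    have h2 : 5 / 6 * D ≤ |gj| := by linarith [abs_nonneg gi]
    rw [hS]; nlinarith [abs_nonneg gi]
  set t : ℝ := 5 * D / (12 * S) with ht
  have htpos : 0 < t := by positivity
  have ht1 : t ≤ 1 := by
    rw [ht, div_le_one (by positivity)]
    have h2 : 5 / 6 * D ≤ |gj| := by linarith [abs_nonneg gi]
    have : 5/6 * D ≤ S := by simp only [hS]; linarith [abs_nonneg gi]
    nlinarith
  set lam : ℝ := gj - gi with hlam
  set c : ℝ := (gi ^ 2 - gj ^ 2) / 2 with hc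
  -- pointwise bound
  have hpt : ∀ x : ℝ, gauss1 θ x *
      (Real.exp (-(x - β j) ^ 2 / 2) / ∑ ℓ, Real.exp (-(x - β ℓ) ^ 2 / 2))
      ≤ gauss1 θ x * Real.exp (t * (lam * (x - θ) + c)) := by
    intro x
    have hg0 : 0 ≤ gauss1 θ x := by
      unfold gauss1; positivity
    apply mul_le_mul_of_nonneg_left _ hg0
    set L : ℝ := ((x - β i) ^ 2 - (x - β j) ^ 2) / 2 with hL
    have hLeq : lam * (x - θ) + c = L := by
      simp only [hL, hlam, hc, hgi, hgj]; ring
    rw [hLeq]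
    have hden_pos : 0 < ∑ ℓ, Real.exp (-(x - β ℓ) ^ 2 / 2) := by
      apply Finset.sum_pos (fun ℓ _ => Real.exp_pos _) ⟨j, Finset.mem_univ j⟩
    have hterm : ∀ (ℓ : Fin k), Real.exp (-(x - β ℓ) ^ 2 / 2)
        ≤ ∑ ℓ', Real.exp (-(x - β ℓ') ^ 2 / 2) := fun ℓ =>
      Finset.single_le_sum (f := fun ℓ' => Real.exp (-(x - β ℓ') ^ 2 / 2))
        (fun _ _ => le_of_lt (Real.exp_pos _)) (Finset.mem_univ ℓ)
    have hle1 : Real.exp (-(x - β j) ^ 2 / 2) / ∑ ℓ, Real.exp (-(x - β ℓ) ^ 2 / 2) ≤ 1 := by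
      rw [div_le_one hden_pos]; exact hterm j
    have hleL : Real.exp (-(x - β j) ^ 2 / 2) / ∑ ℓ, Real.exp (-(x - β ℓ) ^ 2 / 2)
        ≤ Real.exp L := by
      have h1 : Real.exp (-(x - β j) ^ 2 / 2) / ∑ ℓ, Real.exp (-(x - β ℓ) ^ 2 / 2)
          ≤ Real.exp (-(x - β j) ^ 2 / 2) / Real.exp (-(x - β i) ^ 2 / 2) :=
        div_le_div_of_nonneg_left (le_of_lt (Real.exp_pos _)) (Real.exp_pos _) (hterm i)
      rw [← Real.exp_sub] at h1
      have heq : (-(x - β j) ^ 2 / 2) - (-(x - β i) ^ 2 / 2) = L := by rw [hL]; ring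
      rwa [heq] at h1
    rcases le_or_gt L 0 with hL0 | hL0
    · calc _ ≤ Real.exp L := hleL
        _ ≤ Real.exp (t * L) := by
          apply Real.exp_le_exp.2; nlinarith
    · calc _ ≤ 1 := hle1
        _ ≤ Real.exp (t * L) := by
          rw [← Real.exp_zero]; apply Real.exp_le_exp.2; positivity
  -- the dominating function integrates to exp (t^2*lam^2/2 + t*c)
  have hexpand : ∀ x : ℝ, gauss1 θ x * Real.exp (t * (lam * (x - θ) + c))
      = Real.exp (t ^ 2 * lam ^ 2 / 2 + t * c) *
        ((Real.sqrt (2 * π))⁻¹ * Real.exp (-(x - (θ + t * lam)) ^ 2 / 2)) := by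
    intro x
    unfold gauss1
    rw [mul_assoc, ← Real.exp_add, mul_comm (Real.exp _), mul_assoc, ← Real.exp_add]
    congr 1
    ring
  have hint : ∫ x, gauss1 θ x * Real.exp (t * (lam * (x - θ) + c))
      = Real.exp (t ^ 2 * lam ^ 2 / 2 + t * c) := by
    rw [integral_congr_ae (Filter.Eventually.of_forall hexpand), integral_const_mul,
      gauss1_shift_integral, mul_one]
  have hInt : Integrable (fun x => gauss1 θ x * Real.exp (t * (lam * (x - θ) + c))) := by
    rw [funext hexpand]
    apply Integrable.const_mul
    apply Integrable.const_mul
    have hbase : Integrable (fun x : ℝ => Real.exp (-(1/2 : ℝ) * x ^ 2)) :=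
      integrable_exp_neg_mul_sq (by norm_num)
    have h5 := hbase.comp_sub_right (θ + t * lam)
    exact h5.congr (Filter.Eventually.of_forall fun x => by dsimp only; congr 1; ring_nf)
  have hmono : ∫ x, gauss1 θ x *
      (Real.exp (-(x - β j) ^ 2 / 2) / ∑ ℓ, Real.exp (-(x - β ℓ) ^ 2 / 2))
      ≤ ∫ x, gauss1 θ x * Real.exp (t * (lam * (x - θ) + c)) := by
    apply integral_mono_of_nonneg _ hInt (Filter.Eventually.of_forall hpt)
    apply Filter.Eventually.of_forall
    intro x
    have hden_pos : 0 < ∑ ℓ, Real.exp (-(x - β ℓ) ^ 2 / 2) :=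
      Finset.sum_pos (fun ℓ _ => Real.exp_pos _) ⟨j, Finset.mem_univ j⟩
    have : 0 ≤ gauss1 θ x := by unfold gauss1; positivity
    positivity
  rw [hint] at hmono
  refine hmono.trans (Real.exp_le_exp.2 ?_)
  clear_value gi gj S t lam c
  -- arithmetic: t^2*lam^2/2 + t*c ≤ -D^2/33
  have hlam2 : lam ^ 2 ≤ S ^ 2 := by
    have h1 : |lam| ≤ S := by calc |lam| = |gj - gi| := by rw [hlam]
        _ ≤ |gj| + |gi| := abs_sub gj gi
        _ = S := by rw [hS]; ring
    nlinarith [abs_nonneg lam, sq_abs lam]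
  have hgap : 5 / 6 * D ≤ |gj| - |gi| := by linarith
  have hc2 : c ≤ -(5 / 6 * D) * S / 2 := by
    have h1 : gi ^ 2 = |gi| ^ 2 := (sq_abs gi).symm
    have h2 : gj ^ 2 = |gj| ^ 2 := (sq_abs gj).symm
    simp only [hc, h1, h2, hS]
    nlinarith [abs_nonneg gi, abs_nonneg gj]
  have ht2 : t ^ 2 * lam ^ 2 / 2 ≤ 25 * D ^ 2 / 288 := by
    have : t ^ 2 * S ^ 2 = 25 * D ^ 2 / 144 := by
      rw [ht]; field_simp
      ring
    have h := mul_le_mul_of_nonneg_left hlam2 (sq_nonneg t)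
    linarith
  have htc : t * c ≤ -(25 * D ^ 2 / 144) := by
    have h1 : t * c ≤ t * (-(5 / 6 * D) * S / 2) := by
      exact mul_le_mul_of_nonneg_left hc2 (le_of_lt htpos)
    have h2 : t * (-(5 / 6 * D) * S / 2) = -(25 * D ^ 2 / 144) := by
      rw [ht]; field_simp
      ring
    linarith
  nlinarith [sq_nonneg D]
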